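/- Let p, a, b be real numbers with p > 4, a > 0, b ≥ 0, and let t₀ be the unique positive solution of a + b·t² = t^(p−2). Then the function H(t) = (1/2)·a·t² + (1/4)·b·t⁴ − (1/p)·t^p is strictly increasing on (0, t₀) and strictly decreasing on (t₀, ∞); in particular t₀ is the strict global maximum point of H on (0, ∞). -/

import Mathlib

lemma fib_key_lt (p a b t₀ : ℝ) (hp : 4 < p) (ha : 0 < a) (hb : 0 ≤ b)
    (ht₀ : 0 < t₀) (heq : a + b * t₀ ^ 2 = t₀ ^ (p - 2)) :
    ∀ t : ℝ, 0 < t → t < t₀ → t ^ (p - 2) < a + b * t ^ 2 := by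
  intro t ht htt
  set s : ℝ := t / t₀ with hs
  have hs0 : 0 < s := div_pos ht ht₀
  have hs1 : s < 1 := (div_lt_one ht₀).mpr htt
  have hts : t = s * t₀ := by rw [hs, div_mul_cancel₀ t ht₀.ne']
  have h1 : t ^ (p - 2) = s ^ (p - 2) * (a + b * t₀ ^ 2) := by
    rw [hts, Real.mul_rpow hs0.le ht₀.le, heq]
  have h2 : s ^ (p - 2) < 1 := Real.rpow_lt_one hs0.le hs1 (by linarith)
  have h3 : s ^ (p - 2) ≤ s ^ (2 : ℝ) :=
    Real.rpow_le_rpow_of_exponent_ge hs0 hs1.le (by linarith)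
  have h4 : s ^ (2 : ℝ) = s ^ 2 := by
    rw [show ((2:ℝ)) = ((2:ℕ):ℝ) by norm_num, Real.rpow_natCast]
  have h5 : t ^ 2 = s ^ 2 * t₀ ^ 2 := by rw [hts]; ring
  have hpos : 0 < s ^ (p - 2) := Real.rpow_pos_of_pos hs0 _
  rw [h1]
  nlinarith [mul_le_mul_of_nonneg_left (h4 ▸ h3) (mul_nonneg hb (sq_nonneg t₀)),
    mul_lt_mul_of_pos_left h2 ha]

lemma fib_key_gt (p a b t₀ : ℝ) (hp : 4 < p) (ha : 0 < a) (hb : 0 ≤ b)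
    (ht₀ : 0 < t₀) (heq : a + b * t₀ ^ 2 = t₀ ^ (p - 2)) :
    ∀ t : ℝ, t₀ < t → a + b * t ^ 2 < t ^ (p - 2) := by
  intro t htt
  have ht : 0 < t := ht₀.trans htt
  set s : ℝ := t / t₀ with hs
  have hs1 : 1 < s := (one_lt_div ht₀).mpr htt
  have hs0 : 0 < s := by linarith
  have hts : t = s * t₀ := by rw [hs, div_mul_cancel₀ t ht₀.ne']
  have h1 : t ^ (p - 2) = s ^ (p - 2) * (a + b * t₀ ^ 2) := by
    rw [hts, Real.mul_rpow hs0.le ht₀.le, heq]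
  have h2 : 1 < s ^ (p - 2) := Real.one_lt_rpow_iff_of_pos hs0 |>.mpr (Or.inl ⟨hs1, by linarith⟩)
  have h3 : s ^ (2 : ℝ) ≤ s ^ (p - 2) :=
    Real.rpow_le_rpow_of_exponent_le hs1.le (by linarith)
  have h4 : s ^ (2 : ℝ) = s ^ 2 := by
    rw [show ((2:ℝ)) = ((2:ℕ):ℝ) by norm_num, Real.rpow_natCast]
  have h5 : t ^ 2 = s ^ 2 * t₀ ^ 2 := by rw [hts]; ring
  rw [h1]
  nlinarith [mul_le_mul_of_nonneg_left (h4 ▸ h3) (mul_nonneg hb (sq_nonneg t₀)),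
    mul_lt_mul_of_pos_left h2 ha]

theorem fibering_map_monotonicity (p a b t₀ : ℝ) (hp : 4 < p) (ha : 0 < a) (hb : 0 ≤ b)
    (ht₀ : 0 < t₀) (heq : a + b * t₀ ^ 2 = t₀ ^ (p - 2))
    (H : ℝ → ℝ)
    (hH : ∀ t : ℝ, H t = 1 / 2 * a * t ^ 2 + 1 / 4 * b * t ^ 4 - 1 / p * t ^ p) :
    StrictMonoOn H (Set.Ioo 0 t₀) ∧ StrictAntiOn H (Set.Ioi t₀) ∧
      ∀ t : ℝ, 0 < t → t ≠ t₀ → H t < H t₀ := by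
  have hp0 : (0:ℝ) < p := by linarith
  have hHfun : H = fun t => 1 / 2 * a * t ^ 2 + 1 / 4 * b * t ^ 4 - 1 / p * t ^ p :=
    funext hH
  have hderiv : ∀ x : ℝ, HasDerivAt H (a * x + b * x ^ 3 - x ^ (p - 1)) x := by
    intro x
    have h1 : HasDerivAt (fun t : ℝ => 1 / 2 * a * t ^ 2) (a * x) x := by
      have := (hasDerivAt_pow 2 x).const_mul (1 / 2 * a)
      refine this.congr_deriv ?_; push_cast; ring
    have h2 : HasDerivAt (fun t : ℝ => 1 / 4 * b * t ^ 4) (b * x ^ 3) x := by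
      have := (hasDerivAt_pow 4 x).const_mul (1 / 4 * b)
      refine this.congr_deriv ?_; push_cast; ring
    have h3 : HasDerivAt (fun t : ℝ => 1 / p * t ^ p) (x ^ (p - 1)) x := by
      have h := (Real.hasDerivAt_rpow_const (p := p) (x := x)
        (Or.inr (by linarith))).const_mul (1 / p)
      refine h.congr_deriv ?_; field_simp
    have := (h1.add h2).sub h3
    rw [hHfun]; exact this
  have hcont : Continuous H := by
    rw [continuous_iff_continuousAt]
    exact fun x => (hderiv x).continuousAt
  have hmono : StrictMonoOn H (Set.Ioc 0 t₀) := by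
    apply strictMonoOn_of_deriv_pos (convex_Ioc 0 t₀) hcont.continuousOn
    intro x hx
    rw [interior_Ioc] at hx
    obtain ⟨hx0, hx1⟩ := hx
    rw [(hderiv x).deriv]
    have hk := fib_key_lt p a b t₀ hp ha hb ht₀ heq x hx0 hx1
    have hpow : x ^ (p - 1) = x ^ (p - 2) * x := by
      rw [show p - 1 = (p - 2) + 1 by ring, Real.rpow_add hx0, Real.rpow_one]
    rw [hpow]
    nlinarith [hx0, hk]
  have hanti : StrictAntiOn H (Set.Ici t₀) := by
    apply strictAntiOn_of_deriv_neg (convex_Ici t₀) hcont.continuousOn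
    intro x hx
    rw [interior_Ici] at hx
    have hx0 : 0 < x := ht₀.trans hx
    rw [(hderiv x).deriv]
    have hk := fib_key_gt p a b t₀ hp ha hb ht₀ heq x hx
    have hpow : x ^ (p - 1) = x ^ (p - 2) * x := by
      rw [show p - 1 = (p - 2) + 1 by ring, Real.rpow_add hx0, Real.rpow_one]
    rw [hpow]
    nlinarith [hx0, hk]
  refine ⟨hmono.mono Set.Ioo_subset_Ioc_self, hanti.mono Set.Ioi_subset_Ici_self, ?_⟩
  intro t ht htne
  rcases lt_or_gt_of_ne htne with h | h
  · exact hmono ⟨ht, h.le⟩ ⟨ht₀, le_refl _⟩ h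
  · exact hanti (le_refl t₀) h.le h
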